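/- arXiv:1212.2924 — 5 statements merged into one kernel-verified Lean document; each statement's English description precedes it below -/
import Mathlib

section
/- Let m ≥ 2 and let ℓ : Fin m → Fin m → ℤ be any function. Let V be the free ℤ-module with basis {v_{ij} : i < j} indexed by the set P = {(i,j) ∈ Fin m × Fin m : i < j}. For each i ∈ Fin m define the relator r_i = −∑_{j < i} ℓ j i · v_{ji} + ∑_{j > i} ℓ i j · v_{ij} ∈ V. Then ∑_{i} r_i = 0, and consequently the quotient module V ⧸ Submodule.span ℤ {r_0, …, r_{m−1}} has rank at least (m−1)(m−2)/2. -/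
/-- The index set `P = {(i,j) : i < j}` of the basis `v_{ij}` of the free ℤ-module `V`. -/
def IndexP (m : ℕ) : Type := {p : Fin m × Fin m // p.1 < p.2}

instance (m : ℕ) : Fintype (IndexP m) := by unfold IndexP; infer_instance
instance (m : ℕ) : DecidableEq (IndexP m) := by unfold IndexP; infer_instance

/-- The relator `r_i = -∑_{j < i} ℓ j i • v_{ji} + ∑_{j > i} ℓ i j • v_{ij}`
in the free ℤ-module `V = (IndexP m → ℤ)` with standard basis `v_{ij} = Pi.single ⟨(i,j),_⟩ 1`. -/
def relatorR {m : ℕ} (ℓ : Fin m → Fin m → ℤ) (i : Fin m) : IndexP m → ℤ :=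
  -(∑ j : Fin m, if h : j < i then
      (ℓ j i) • Pi.single (⟨(j, i), h⟩ : IndexP m) (1 : ℤ) else 0) +
  (∑ j : Fin m, if h : i < j then
      (ℓ i j) • Pi.single (⟨(i, j), h⟩ : IndexP m) (1 : ℤ) else 0)

/-- `IndexP m` is equivalent to `Σ j : Fin m, Fin j`. -/
def indexPEquiv (m : ℕ) : IndexP m ≃ (Σ j : Fin m, Fin (j : ℕ)) where
  toFun p := ⟨p.1.2, ⟨p.1.1, p.2⟩⟩
  invFun q := ⟨(⟨q.2, q.2.isLt.trans q.1.isLt⟩, q.1), q.2.isLt⟩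
  left_inv := by rintro ⟨⟨⟨i, hi⟩, ⟨j, hj⟩⟩, h⟩; rfl
  right_inv := by rintro ⟨⟨j, hj⟩, ⟨i, hi⟩⟩; rfl

lemma card_indexP (m : ℕ) : Fintype.card (IndexP m) = m * (m - 1) / 2 := by
  rw [Fintype.card_congr (indexPEquiv m), Fintype.card_sigma]
  simp only [Fintype.card_fin]
  rw [Fin.sum_univ_eq_sum_range (fun i => i) m, Finset.sum_range_id]

/-- The relators `r_i` sum to zero, and consequently the quotient of the free ℤ-module on
`{(i,j) : i < j}` by the span of the relators has rank at least `(m-1)(m-2)/2`. -/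
theorem relators_sum_zero_and_rank_quotient_ge (m : ℕ) (hm : 2 ≤ m)
    (ℓ : Fin m → Fin m → ℤ) :
    (∑ i : Fin m, relatorR ℓ i) = 0 ∧
    (((m - 1) * (m - 2) / 2 : ℕ) : Cardinal) ≤
      Module.rank ℤ ((IndexP m → ℤ) ⧸ Submodule.span ℤ (Set.range (relatorR ℓ))) := by
  have hsum : (∑ i : Fin m, relatorR ℓ i) = 0 := by
    unfold relatorR
    erw [Finset.sum_add_distrib, Finset.sum_neg_distrib]
    have hcomm : (∑ i : Fin m, ∑ j : Fin m, if h : j < i then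
          (ℓ j i) • (Pi.single (⟨(j, i), h⟩ : IndexP m) (1 : ℤ) : IndexP m → ℤ) else 0) =
        ∑ i : Fin m, ∑ j : Fin m, if h : i < j then
          (ℓ i j) • (Pi.single (⟨(i, j), h⟩ : IndexP m) (1 : ℤ) : IndexP m → ℤ) else 0 :=
      Finset.sum_comm
    erw [hcomm]
    exact neg_add_cancel _
  refine ⟨hsum, ?_⟩
  set N := Submodule.span ℤ (Set.range (relatorR ℓ)) with hN
  -- the zeroth relator lies in the span of the others
  have h0 : (0 : ℕ) < m := by omega
  set i₀ : Fin m := ⟨0, h0⟩ with hi₀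
  set S : Finset (Fin m) := Finset.univ.erase i₀ with hS
  have hr0 : relatorR ℓ i₀ = -∑ i ∈ S, relatorR ℓ i := by
    have := Finset.add_sum_erase Finset.univ (relatorR ℓ) (Finset.mem_univ i₀)
    rw [hsum] at this
    exact eq_neg_of_add_eq_zero_left this
  have hle : N ≤ Submodule.span ℤ (relatorR ℓ '' ↑S) := by
    rw [hN, Submodule.span_le]
    rintro _ ⟨i, rfl⟩
    by_cases hi : i = i₀
    · subst hi
      rw [hr0]
      exact Submodule.neg_mem _ (Submodule.sum_mem _ fun j hj =>
        Submodule.subset_span ⟨j, hj, rfl⟩)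
    · exact Submodule.subset_span ⟨i, by simp [hS, hi], rfl⟩
  have hrankN : Module.rank ℤ N ≤ (m - 1 : ℕ) := by
    refine le_trans (Submodule.rank_mono hle) ?_
    refine le_trans (rank_span_le _) ?_
    refine le_trans (Cardinal.mk_image_le) ?_
    have hcard : S.card = m - 1 := by
      rw [hS, Finset.card_erase_of_mem (Finset.mem_univ i₀), Finset.card_univ, Fintype.card_fin]
    rw [← hcard]
    exact (Cardinal.mk_coe_finset (s := S)).le
  have hrankV : Module.rank ℤ (IndexP m → ℤ) = (m * (m - 1) / 2 : ℕ) := by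
    rw [rank_fun', card_indexP]
  have key := Submodule.rank_quotient_add_rank N
  rw [hrankV] at key
  have harith : (m - 1) * (m - 2) / 2 + (m - 1) = m * (m - 1) / 2 := by
    obtain ⟨k, rfl⟩ : ∃ k, m = k + 2 := ⟨m - 2, by omega⟩
    obtain ⟨c, hc⟩ := Nat.even_mul_succ_self k
    have e1 : (k + 2 - 1) * (k + 2 - 2) = c + c := by
      have t1 : k + 2 - 1 = k + 1 := by omega
      have t2 : k + 2 - 2 = k := by omega
      rw [t1, t2, Nat.mul_comm]; exact hc
    have e2 : (k + 2) * (k + 2 - 1) = (c + c) + 2 * (k + 1) := by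
      have t1 : k + 2 - 1 = k + 1 := by omega
      have t3 : (k + 2) * (k + 1) = k * (k + 1) + 2 * (k + 1) := by ring
      rw [t1, t3, hc]
    rw [e1, e2]
    omega
  rw [← harith, Nat.cast_add] at key
  have h2 : ((((m - 1) * (m - 2) / 2 : ℕ) : Cardinal) + ((m - 1 : ℕ) : Cardinal)) ≤
      Module.rank ℤ ((IndexP m → ℤ) ⧸ N) + ((m - 1 : ℕ) : Cardinal) :=
    calc ((((m - 1) * (m - 2) / 2 : ℕ) : Cardinal) + ((m - 1 : ℕ) : Cardinal))
        = Module.rank ℤ ((IndexP m → ℤ) ⧸ N) + Module.rank ℤ N := key.symm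
      _ ≤ Module.rank ℤ ((IndexP m → ℤ) ⧸ N) + ((m - 1 : ℕ) : Cardinal) :=
          add_le_add_right hrankN _
  exact (Cardinal.add_nat_le_add_nat_iff (m - 1)).mp h2
end

section
/- Let G be a group generated by a subset S, i.e. Subgroup.closure S = ⊤. Then the commutator subgroup γ₂(G) equals the join of the subgroup closure of the set {⁅a, b⁆ : a ∈ S, b ∈ S} with the third lower central subgroup γ₃(G); in particular, the quotient γ₂(G)/γ₃(G) is generated by the images of the commutators ⁅a, b⁆ with a, b ∈ S. -/
open scoped commutatorElement

/-- If a group `G` is generated by a subset `S`, then the commutator subgroup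
`γ₂(G) = (⊤ : Subgroup G).lowerCentralSeries 1` is the join of the subgroup generated by the commutators
`⁅a, b⁆` with `a, b ∈ S` and the third lower central subgroup `γ₃(G) = (⊤ : Subgroup G).lowerCentralSeries 2`;
in particular `γ₂(G)/γ₃(G)` is generated by the images of these commutators. -/
theorem lcs2_eq_closure_commutators_sup_lcs3 {G : Type*} [Group G] (S : Set G)
    (hS : Subgroup.closure S = ⊤) :
    (⊤ : Subgroup G).lowerCentralSeries 1 =
      Subgroup.closure {x : G | ∃ a ∈ S, ∃ b ∈ S, x = ⁅a, b⁆} ⊔ (⊤ : Subgroup G).lowerCentralSeries 2 := by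
  set K := Subgroup.closure {x : G | ∃ a ∈ S, ∃ b ∈ S, x = ⁅a, b⁆} ⊔ (⊤ : Subgroup G).lowerCentralSeries 2
    with hKdef
  have hKle : K ≤ (⊤ : Subgroup G).lowerCentralSeries 1 := by
    apply sup_le
    · rw [Subgroup.closure_le]
      rintro x ⟨a, _, b, _, rfl⟩
      rw [Subgroup.lowerCentralSeries_one]
      exact Subgroup.commutator_mem_commutator (Subgroup.mem_top a) (Subgroup.mem_top b)
    · exact (⊤ : Subgroup G).lowerCentralSeries_antitone (by norm_num)
  -- conjugates of elements of K stay in K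
  have hnorm : ∀ g x : G, x ∈ K → g * x * g⁻¹ ∈ K := by
    intro g x hx
    have hx2 : x ∈ (⊤ : Subgroup G).lowerCentralSeries 1 := hKle hx
    have h3 : ⁅g, x⁆ ∈ (⊤ : Subgroup G).lowerCentralSeries 2 := by
      have : ⁅x, g⁆ ∈ (⊤ : Subgroup G).lowerCentralSeries 2 := by
        rw [show (2 : ℕ) = 1 + 1 from rfl, Subgroup.lowerCentralSeries_succ]
        exact Subgroup.commutator_mem_commutator hx2 (Subgroup.mem_top g)
      simpa [commutatorElement_inv] using inv_mem this
    have hid : g * x * g⁻¹ = ⁅g, x⁆ * x := by group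
    rw [hid]
    exact mul_mem (le_sup_right (α := Subgroup G) h3) hx
  have key : ∀ x ∈ Subgroup.closure S, ∀ y ∈ Subgroup.closure S, ⁅x, y⁆ ∈ K := by
    intro x hx
    induction hx using Subgroup.closure_induction with
    | mem a ha =>
      intro y hy
      induction hy using Subgroup.closure_induction with
      | mem b hb =>
        exact le_sup_left (α := Subgroup G) (Subgroup.subset_closure ⟨a, ha, b, hb, rfl⟩)
      | one => simpa using one_mem K
      | mul b c _ _ ihb ihc =>
        have hid : ⁅a, b * c⁆ = ⁅a, b⁆ * (b * ⁅a, c⁆ * b⁻¹) := by group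
        rw [hid]
        exact mul_mem ihb (hnorm b _ ihc)
      | inv b _ ihb =>
        have hid : ⁅a, b⁻¹⁆ = b⁻¹ * ⁅a, b⁆⁻¹ * (b⁻¹)⁻¹ := by group
        rw [hid]
        exact hnorm b⁻¹ _ (inv_mem ihb)
    | one => intro y hy; simpa using one_mem K
    | mul a b _ _ iha ihb =>
      intro y hy
      have hid : ⁅a * b, y⁆ = (a * ⁅b, y⁆ * a⁻¹) * ⁅a, y⁆ := by group
      rw [hid]
      exact mul_mem (hnorm a _ (ihb y hy)) (iha y hy)
    | inv a _ iha =>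
      intro y hy
      have hid : ⁅a⁻¹, y⁆ = a⁻¹ * ⁅a, y⁆⁻¹ * (a⁻¹)⁻¹ := by group
      rw [hid]
      exact hnorm a⁻¹ _ (inv_mem (iha y hy))
  refine le_antisymm ?_ hKle
  rw [Subgroup.lowerCentralSeries_one, commutator_def]
  rw [Subgroup.commutator_le]
  intro g _ h _
  exact key g (hS ▸ Subgroup.mem_top g) h (hS ▸ Subgroup.mem_top h)
end

section
/- Let F be the free group on m generators x_1, …, x_m (F = FreeGroup (Fin m)). Then the quotient γ₂(F)/γ₃(F) of the second by the third lower central subgroup is a free abelian group of rank m(m−1)/2, and the images of the basic commutators ⁅x_i, x_j⁆ for i < j form a basis. -/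
open scoped commutatorElement

/-- Every commutator lies in the commutator subgroup `γ₂(G) = lowerCentralSeries G 1`. -/
lemma commutatorElement_mem_lcs_one {G : Type*} [Group G] (a b : G) :
    ⁅a, b⁆ ∈ (⊤ : Subgroup G).lowerCentralSeries 1 := by
  rw [Subgroup.top_lowerCentralSeries_one, commutator_def]
  exact Subgroup.commutator_mem_commutator (Subgroup.mem_top a) (Subgroup.mem_top b)

open Finsupp Subgroup

namespace HallAux

variable (m : ℕ)

abbrev P := {p : Fin m × Fin m // p.1 < p.2}
abbrev V := P m →₀ ℤ

noncomputable def bil : (Fin m →₀ ℤ) →ₗ[ℤ] (Fin m →₀ ℤ) →ₗ[ℤ] V m :=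
  Finsupp.lsum ℤ fun i => LinearMap.toSpanSingleton ℤ _
    (Finsupp.lsum ℤ fun j => LinearMap.toSpanSingleton ℤ (V m)
      (if h : i < j then Finsupp.single (⟨(i, j), h⟩ : P m) 1 else 0))

variable {m}

lemma bil_single (i j : Fin m) :
    bil m (single i 1) (single j 1) =
      if h : i < j then Finsupp.single (⟨(i, j), h⟩ : P m) 1 else 0 := by
  simp [bil]

/-- The free nilpotent-of-class-2 model group. -/
@[ext] structure H (m : ℕ) where
  a : Fin m →₀ ℤ
  u : V m

noncomputable instance : Mul (H m) := ⟨fun x y => ⟨x.a + y.a, x.u + y.u + bil m x.a y.a⟩⟩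
noncomputable instance : One (H m) := ⟨⟨0, 0⟩⟩
noncomputable instance : Inv (H m) := ⟨fun x => ⟨-x.a, -x.u + bil m x.a x.a⟩⟩

@[simp] lemma mul_a (x y : H m) : (x * y).a = x.a + y.a := rfl
@[simp] lemma mul_u (x y : H m) : (x * y).u = x.u + y.u + bil m x.a y.a := rfl
@[simp] lemma one_a : (1 : H m).a = 0 := rfl
@[simp] lemma one_u : (1 : H m).u = 0 := rfl
@[simp] lemma inv_a (x : H m) : (x⁻¹).a = -x.a := rfl
@[simp] lemma inv_u (x : H m) : (x⁻¹).u = -x.u + bil m x.a x.a := rfl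

noncomputable instance : Group (H m) where
  mul_assoc x y z := by
    ext : 1 <;> simp [map_add, map_neg, LinearMap.add_apply, LinearMap.neg_apply] <;> abel
  one_mul x := by ext : 1 <;> simp
  mul_one x := by ext : 1 <;> simp
  inv_mul_cancel x := by
    ext : 1 <;> simp [map_neg, LinearMap.neg_apply] <;> abel

lemma H.central {x : H m} (hx : x.a = 0) (y : H m) : x * y = y * x := by
  ext : 1 <;> simp [hx] <;> abel

lemma H.commutator_eq (x y : H m) :
    ⁅x, y⁆ = ⟨0, bil m x.a y.a - bil m y.a x.a⟩ := by
  ext : 1 <;>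
    simp [commutatorElement_def, map_add, map_neg, LinearMap.add_apply, LinearMap.neg_apply] <;>
    abel


variable (m)

abbrev F := FreeGroup (Fin m)

noncomputable def φ : F m →* H m := FreeGroup.lift fun i => ⟨single i 1, 0⟩

@[simp] lemma φ_of (i : Fin m) : φ m (FreeGroup.of i) = ⟨single i 1, 0⟩ :=
  FreeGroup.lift_apply_of

variable {m}

lemma φ_a_eq_zero {x : F m} (hx : x ∈ (⊤ : Subgroup (F m)).lowerCentralSeries 1) :
    (φ m x).a = 0 := by
  have hcomm : (⊤ : Subgroup (F m)).lowerCentralSeries 1 ≤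
      ({ toFun := fun h : H m => Multiplicative.ofAdd h.a
         map_one' := rfl
         map_mul' := fun x y => rfl : H m →* Multiplicative (Fin m →₀ ℤ)}.comp (φ m)).ker := by
    rw [Subgroup.top_lowerCentralSeries_one, commutator_def, Subgroup.commutator_le]
    intro g₁ _ g₂ _
    rw [MonoidHom.mem_ker, map_commutatorElement]
    exact commutatorElement_eq_one_iff_mul_comm.mpr (mul_comm _ _)
  have := hcomm hx
  rw [MonoidHom.mem_ker] at this
  exact congrArg Multiplicative.toAdd this

lemma γ₃_eq : (⊤ : Subgroup (F m)).lowerCentralSeries 2 = ⁅(⊤ : Subgroup (F m)).lowerCentralSeries 1, ⊤⁆ := rfl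

lemma mem_γ₃_left {c : F m} (hc : c ∈ (⊤ : Subgroup (F m)).lowerCentralSeries 1) (x : F m) :
    ⁅c, x⁆ ∈ (⊤ : Subgroup (F m)).lowerCentralSeries 2 := by
  rw [γ₃_eq]; exact Subgroup.commutator_mem_commutator hc (Subgroup.mem_top x)

lemma mem_γ₃_right {c : F m} (hc : c ∈ (⊤ : Subgroup (F m)).lowerCentralSeries 1) (x : F m) :
    ⁅x, c⁆ ∈ (⊤ : Subgroup (F m)).lowerCentralSeries 2 := by
  rw [γ₃_eq, Subgroup.commutator_comm]
  exact Subgroup.commutator_mem_commutator (Subgroup.mem_top x) hc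

lemma γ₃_le_ker : (⊤ : Subgroup (F m)).lowerCentralSeries 2 ≤ (φ m).ker := by
  rw [γ₃_eq, Subgroup.commutator_le]
  intro p hp q _
  rw [MonoidHom.mem_ker, map_commutatorElement]
  exact commutatorElement_eq_one_iff_mul_comm.mpr
    ((H.central (φ_a_eq_zero hp) (φ m q)).symm ▸ rfl)


variable (m)

abbrev N : Subgroup ((⊤ : Subgroup (F m)).lowerCentralSeries 1) :=
  ((⊤ : Subgroup (F m)).lowerCentralSeries 2).subgroupOf ((⊤ : Subgroup (F m)).lowerCentralSeries 1)

abbrev Q := (⊤ : Subgroup (F m)).lowerCentralSeries 1 ⧸ N m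

variable {m}

lemma mk_eq_mk {x y : F m} (hx : x ∈ (⊤ : Subgroup (F m)).lowerCentralSeries 1)
    (hy : y ∈ (⊤ : Subgroup (F m)).lowerCentralSeries 1) (h : x⁻¹ * y ∈ (⊤ : Subgroup (F m)).lowerCentralSeries 2) :
    (QuotientGroup.mk ⟨x, hx⟩ : Q m) = QuotientGroup.mk ⟨y, hy⟩ := by
  rw [QuotientGroup.eq]
  exact (Subgroup.mem_subgroupOf).mpr h

noncomputable instance : CommGroup (Q m) :=
  { (inferInstance : Group (Q m)) with
    mul_comm := fun x y => by
      induction x using QuotientGroup.induction_on with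
      | _ a =>
      induction y using QuotientGroup.induction_on with
      | _ b =>
      rw [← QuotientGroup.mk_mul, ← QuotientGroup.mk_mul, QuotientGroup.eq]
      refine (Subgroup.mem_subgroupOf).mpr ?_
      have : (((a * b)⁻¹ * (b * a) : (⊤ : Subgroup (F m)).lowerCentralSeries 1) : F m)
          = ⁅(b : F m)⁻¹, (a : F m)⁻¹⁆ := by
        push_cast
        group
      rw [this]
      exact mem_γ₃_left (inv_mem b.2) _ }

variable (m)

noncomputable def ψ : (⊤ : Subgroup (F m)).lowerCentralSeries 1 →* Multiplicative (V m) where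
  toFun x := Multiplicative.ofAdd (φ m (x : F m)).u
  map_one' := by
    show Multiplicative.ofAdd (φ m 1).u = 1
    rw [map_one]
    rfl
  map_mul' x y := by
    show Multiplicative.ofAdd (φ m ((x : F m) * y)).u = _
    rw [map_mul]
    have : (φ m (x : F m)).a = 0 := φ_a_eq_zero x.2
    simp [this]

noncomputable def ψ' : Q m →* Multiplicative (V m) :=
  QuotientGroup.lift (N m) (ψ m) (by
    intro x hx
    have hker : φ m (x : F m) = 1 := γ₃_le_ker ((Subgroup.mem_subgroupOf).mp hx)
    show Multiplicative.ofAdd (φ m (x : F m)).u = 1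
    rw [hker]
    rfl)

@[simp] lemma ψ'_mk (x : (⊤ : Subgroup (F m)).lowerCentralSeries 1) :
    ψ' m (QuotientGroup.mk x) = Multiplicative.ofAdd (φ m (x : F m)).u := rfl

/-- basic commutator images -/
noncomputable def cc (p : P m) : Q m :=
  QuotientGroup.mk ⟨⁅FreeGroup.of p.1.1, FreeGroup.of p.1.2⁆,
    commutatorElement_mem_lcs_one _ _⟩

noncomputable def gg : Multiplicative (V m) →* Q m :=
  AddMonoidHom.toMultiplicativeLeft
    (Finsupp.liftAddHom fun p => zmultiplesHom (Additive (Q m)) (Additive.ofMul (cc m p)))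

lemma gg_single (p : P m) (n : ℤ) :
    gg m (Multiplicative.ofAdd (Finsupp.single p n)) = cc m p ^ n := by
  simp [gg, AddMonoidHom.toMultiplicativeLeft, Finsupp.sum_single_index]


/-- images of commutators in `Q` -/
noncomputable def dd (a b : F m) : Q m :=
  QuotientGroup.mk ⟨⁅a, b⁆, commutatorElement_mem_lcs_one a b⟩

variable {m}

lemma dd_mul_left (a a' b : F m) : dd m (a * a') b = dd m a b * dd m a' b := by
  have h1 : dd m a b * dd m a' b = QuotientGroup.mk
      ⟨⁅a, b⁆ * ⁅a', b⁆, mul_mem (commutatorElement_mem_lcs_one a b)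
        (commutatorElement_mem_lcs_one a' b)⟩ := rfl
  rw [h1]
  refine (mk_eq_mk _ _ ?_).symm
  have key : (⁅a, b⁆ * ⁅a', b⁆)⁻¹ * ⁅a * a', b⁆ =
      ((⁅a, b⁆ * ⁅a', b⁆)⁻¹ * ⁅a, ⁅a', b⁆⁆ * (⁅a, b⁆ * ⁅a', b⁆)) *
        ⁅⁅a', b⁆⁻¹, ⁅a, b⁆⁻¹⁆ := by
    simp only [commutatorElement_def]
    group
  rw [key]
  exact mul_mem
    (Subgroup.Normal.conj_mem' ((Subgroup.lowerCentralSeries_normal ⊤ 2 : ((⊤ : Subgroup (F m)).lowerCentralSeries 2).Normal)) _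
      (mem_γ₃_right (commutatorElement_mem_lcs_one a' b) a) _)
    (mem_γ₃_left (inv_mem (commutatorElement_mem_lcs_one a' b)) _)

lemma dd_mul_right (a b b' : F m) : dd m a (b * b') = dd m a b * dd m a b' := by
  have h1 : dd m a b * dd m a b' = QuotientGroup.mk
      ⟨⁅a, b⁆ * ⁅a, b'⁆, mul_mem (commutatorElement_mem_lcs_one a b)
        (commutatorElement_mem_lcs_one a b')⟩ := rfl
  rw [h1]
  refine (mk_eq_mk _ _ ?_).symm
  have key : (⁅a, b⁆ * ⁅a, b'⁆)⁻¹ * ⁅a, b * b'⁆ =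
      ⁅a, b'⁆⁻¹ * ⁅b, ⁅a, b'⁆⁆ * ⁅a, b'⁆ := by
    simp only [commutatorElement_def]
    group
  rw [key]
  exact Subgroup.Normal.conj_mem' ((Subgroup.lowerCentralSeries_normal ⊤ 2 : ((⊤ : Subgroup (F m)).lowerCentralSeries 2).Normal)) _
    (mem_γ₃_right (commutatorElement_mem_lcs_one a b') b) _

lemma dd_one_left (b : F m) : dd m 1 b = 1 := by
  have : (⟨⁅(1 : F m), b⁆, commutatorElement_mem_lcs_one 1 b⟩ :
      (⊤ : Subgroup (F m)).lowerCentralSeries 1) = 1 := Subtype.ext (commutatorElement_one_left b)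
  rw [dd, this, QuotientGroup.mk_one]

lemma dd_one_right (a : F m) : dd m a 1 = 1 := by
  have : (⟨⁅a, (1 : F m)⁆, commutatorElement_mem_lcs_one a 1⟩ :
      (⊤ : Subgroup (F m)).lowerCentralSeries 1) = 1 := Subtype.ext (commutatorElement_one_right a)
  rw [dd, this, QuotientGroup.mk_one]

lemma dd_inv_left (a b : F m) : dd m a⁻¹ b = (dd m a b)⁻¹ := by
  have := dd_mul_left a⁻¹ a b
  rw [inv_mul_cancel, dd_one_left] at this
  exact eq_inv_of_mul_eq_one_left this.symm

lemma dd_inv_right (a b : F m) : dd m a b⁻¹ = (dd m a b)⁻¹ := by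
  have := dd_mul_right a b⁻¹ b
  rw [inv_mul_cancel, dd_one_right] at this
  exact eq_inv_of_mul_eq_one_left this.symm

lemma dd_swap (a b : F m) : dd m b a = (dd m a b)⁻¹ := by
  rw [dd, dd, ← QuotientGroup.mk_inv]
  congr 1
  exact Subtype.ext (commutatorElement_inv a b).symm


variable (m)

noncomputable def LL (b : F m) : F m →* Q m where
  toFun a := gg m (Multiplicative.ofAdd
    (bil m (φ m a).a (φ m b).a - bil m (φ m b).a (φ m a).a))
  map_one' := by simp
  map_mul' a a' := by
    rw [map_mul, mul_a, map_add, LinearMap.add_apply, map_add, ← sub_add_sub_comm,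
      ofAdd_add, map_mul]

noncomputable def RR (a : F m) : F m →* Q m where
  toFun b := gg m (Multiplicative.ofAdd
    (bil m (φ m a).a (φ m b).a - bil m (φ m b).a (φ m a).a))
  map_one' := by simp
  map_mul' b b' := by
    rw [map_mul, mul_a, map_add, map_add, LinearMap.add_apply, ← sub_add_sub_comm,
      ofAdd_add, map_mul]

variable {m}

lemma LL_eq_RR (a b : F m) : LL m b a = RR m a b := rfl

lemma LL_base (i j : Fin m) : LL m (FreeGroup.of j) (FreeGroup.of i) =
    dd m (FreeGroup.of i) (FreeGroup.of j) := by
  show gg m (Multiplicative.ofAdd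
    (bil m (φ m (FreeGroup.of i)).a (φ m (FreeGroup.of j)).a -
      bil m (φ m (FreeGroup.of j)).a (φ m (FreeGroup.of i)).a)) = _
  rw [φ_of, φ_of]
  rcases lt_trichotomy i j with h | h | h
  · rw [show (⟨single i 1, 0⟩ : H m).a = single i 1 from rfl,
      show (⟨single j 1, 0⟩ : H m).a = single j 1 from rfl,
      bil_single, bil_single, dif_pos h, dif_neg (lt_asymm h), sub_zero, gg_single,
      zpow_one]
    rfl
  · subst h
    rw [sub_self]
    have h1 : (⟨⁅FreeGroup.of i, FreeGroup.of i⁆,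
        commutatorElement_mem_lcs_one _ _⟩ : (⊤ : Subgroup (F m)).lowerCentralSeries 1) = 1 :=
      Subtype.ext (commutatorElement_self _)
    rw [show (Multiplicative.ofAdd (0 : V m)) = 1 from rfl, map_one, dd, h1,
      QuotientGroup.mk_one]
  · rw [show (⟨single i 1, 0⟩ : H m).a = single i 1 from rfl,
      show (⟨single j 1, 0⟩ : H m).a = single j 1 from rfl,
      bil_single, bil_single, dif_pos h, dif_neg (lt_asymm h), zero_sub, ofAdd_neg,
      map_inv, gg_single, zpow_one, dd_swap]
    rfl

lemma LL_eq_dd (a b : F m) : LL m b a = dd m a b := by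
  induction a using FreeGroup.induction_on with
  | C1 =>
    rw [map_one, dd_one_left]
  | of i =>
    induction b using FreeGroup.induction_on with
    | C1 =>
      rw [LL_eq_RR, map_one, dd_one_right]
    | of j => exact LL_base i j
    | inv_of j hj =>
      rw [LL_eq_RR, map_inv, ← LL_eq_RR, hj, dd_inv_right]
    | mul b b' hb hb' =>
      rw [LL_eq_RR, map_mul, ← LL_eq_RR, ← LL_eq_RR, hb, hb', dd_mul_right]
  | inv_of i hi =>
    rw [map_inv, hi, dd_inv_left]
  | mul a a' ha ha' =>
    rw [map_mul, ha, ha', dd_mul_left]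


lemma ψ'_mk_commutator (a b : F m) (h : ⁅a, b⁆ ∈ (⊤ : Subgroup (F m)).lowerCentralSeries 1) :
    ψ' m (QuotientGroup.mk ⟨⁅a, b⁆, h⟩) = Multiplicative.ofAdd
      (bil m (φ m a).a (φ m b).a - bil m (φ m b).a (φ m a).a) := by
  rw [ψ'_mk, map_commutatorElement, H.commutator_eq]

lemma ψ'_cc (p : P m) :
    ψ' m (cc m p) = Multiplicative.ofAdd (Finsupp.single p (1 : ℤ)) := by
  rw [cc, ψ'_mk_commutator, φ_of, φ_of]
  rw [show (⟨single p.1.1 1, 0⟩ : H m).a = single p.1.1 1 from rfl,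
    show (⟨single p.1.2 1, 0⟩ : H m).a = single p.1.2 1 from rfl,
    bil_single, bil_single, dif_pos p.2, dif_neg (lt_asymm p.2), sub_zero]

lemma gg_ψ' (q : Q m) : gg m (ψ' m q) = q := by
  induction q using QuotientGroup.induction_on with
  | _ x =>
  obtain ⟨x, hx⟩ := x
  have hx' : x ∈ Subgroup.closure (commutatorSet (F m)) := by
    rw [← commutator_eq_closure]
    exact hx
  refine Subgroup.closure_induction
    (p := fun y _ => ∀ h : y ∈ (⊤ : Subgroup (F m)).lowerCentralSeries 1,
      gg m (ψ' m (QuotientGroup.mk ⟨y, h⟩)) = QuotientGroup.mk ⟨y, h⟩)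
    ?_ ?_ ?_ ?_ hx' hx
  · rintro y ⟨a, b, rfl⟩ h
    rw [ψ'_mk_commutator]
    exact LL_eq_dd a b
  · intro h
    have h1 : (⟨(1 : F m), h⟩ : (⊤ : Subgroup (F m)).lowerCentralSeries 1) = 1 := rfl
    rw [h1, QuotientGroup.mk_one, map_one, map_one]
  · intro y z hy hz py pz h
    have hy2 : y ∈ (⊤ : Subgroup (F m)).lowerCentralSeries 1 := by
      rw [Subgroup.top_lowerCentralSeries_one, commutator_eq_closure]; exact hy
    have hz2 : z ∈ (⊤ : Subgroup (F m)).lowerCentralSeries 1 := by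
      rw [Subgroup.top_lowerCentralSeries_one, commutator_eq_closure]; exact hz
    have h1 : (⟨y * z, h⟩ : (⊤ : Subgroup (F m)).lowerCentralSeries 1) = ⟨y, hy2⟩ * ⟨z, hz2⟩ := rfl
    rw [h1, QuotientGroup.mk_mul, map_mul, map_mul, py hy2, pz hz2]
  · intro y hy py h
    have hy2 : y ∈ (⊤ : Subgroup (F m)).lowerCentralSeries 1 := by
      rw [Subgroup.top_lowerCentralSeries_one, commutator_eq_closure]; exact hy
    have h1 : (⟨y⁻¹, h⟩ : (⊤ : Subgroup (F m)).lowerCentralSeries 1) = (⟨y, hy2⟩)⁻¹ := rfl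
    rw [h1, QuotientGroup.mk_inv, map_inv, map_inv, py hy2]

lemma ψ'_gg (v : Multiplicative (V m)) : ψ' m (gg m v) = v := by
  have key : ∀ w : V m,
      ψ' m (gg m (Multiplicative.ofAdd w)) = Multiplicative.ofAdd w := by
    intro w
    induction w using Finsupp.induction with
    | zero =>
      rw [show (Multiplicative.ofAdd (0 : V m)) = 1 from rfl, map_one, map_one]
    | single_add p n f _ _ ih =>
      rw [ofAdd_add, map_mul, map_mul, ih, gg_single, map_zpow, ψ'_cc]
      congr 1
      rw [← ofAdd_zsmul, Finsupp.smul_single, smul_eq_mul, mul_one]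
  exact key v.toAdd

noncomputable def ee : Q m ≃* Multiplicative (V m) where
  toFun := ψ' m
  invFun := gg m
  left_inv := gg_ψ'
  right_inv := ψ'_gg
  map_mul' := map_mul (ψ' m)

end HallAux

/-- Hall's basis theorem in the first nontrivial case: for the free group `F` on `m`
generators `x_i`, the quotient `γ₂(F)/γ₃(F)` is free abelian of rank `m(m-1)/2`, with basis
the images of the basic commutators `⁅x_i, x_j⁆` for `i < j`. -/
theorem freeGroup_lcs2_quotient_lcs3_free_abelian (m : ℕ) :
    ∃ e : ((⊤ : Subgroup (FreeGroup (Fin m))).lowerCentralSeries 1 ⧸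
        ((⊤ : Subgroup (FreeGroup (Fin m))).lowerCentralSeries 2).subgroupOf
          ((⊤ : Subgroup (FreeGroup (Fin m))).lowerCentralSeries 1)) ≃*
        Multiplicative ({p : Fin m × Fin m // p.1 < p.2} →₀ ℤ),
      ∀ (i j : Fin m) (h : i < j),
        e (QuotientGroup.mk
            (⟨⁅FreeGroup.of i, FreeGroup.of j⁆, commutatorElement_mem_lcs_one _ _⟩ :
              (⊤ : Subgroup (FreeGroup (Fin m))).lowerCentralSeries 1)) =
          Multiplicative.ofAdd (Finsupp.single (⟨(i, j), h⟩ :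
            {p : Fin m × Fin m // p.1 < p.2}) (1 : ℤ)) := by
  exact ⟨HallAux.ee (m := m), fun i j h => HallAux.ψ'_cc (m := m) ⟨(i, j), h⟩⟩
end

section
/- Let m ≥ 2 and let F = FreeGroup (Fin m) with generators x_0, …, x_{m−1}. Let ℓ : Fin m → Fin m → ℤ satisfy ℓ i j = ℓ j i for all i ≠ j, and let λ : Fin m → F be elements such that for each i, λ i · (∏_{j ≠ i} (x_j)^{ℓ i j})⁻¹ ∈ γ₂(F), where the product is over j ≠ i in increasing order. Let π be the quotient of F by the normal closure of the set {⁅x_i, λ i⁆ : i ∈ Fin m} ∪ γ₃(F), i.e. the group presented by ⟨x_1,…,x_m ∣ [x_1,λ_1], …, [x_m,λ_m], γ₃(F)⟩. Then there exists a surjective group homomorphism from γ₂(π) onto the free abelian group ℤ^{(m−1)(m−2)/2} (note that γ₃(π) is trivial, so γ₂(π) = γ₂(π)/γ₃(π) is abelian). -/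
open scoped commutatorElement

/-! ### Auxiliary: central extension of `V` by `W` along a bilinear map -/

section Heis
variable {V W : Type} [AddCommGroup V] [AddCommGroup W] [Module ℤ V] [Module ℤ W]

@[ext] structure Heis (β : V →ₗ[ℤ] V →ₗ[ℤ] W) where
  fst : V
  snd : W

variable (β : V →ₗ[ℤ] V →ₗ[ℤ] W)

instance : Mul (Heis β) := ⟨fun a b => ⟨a.1 + b.1, a.2 + b.2 + β a.1 b.1⟩⟩
instance : One (Heis β) := ⟨⟨0, 0⟩⟩
instance : Inv (Heis β) := ⟨fun a => ⟨-a.1, -a.2 + β a.1 a.1⟩⟩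

@[simp] lemma Heis.mul_fst (a b : Heis β) : (a * b).fst = a.fst + b.fst := rfl
@[simp] lemma Heis.mul_snd (a b : Heis β) : (a * b).snd = a.snd + b.snd + β a.fst b.fst := rfl
@[simp] lemma Heis.one_fst : (1 : Heis β).fst = 0 := rfl
@[simp] lemma Heis.one_snd : (1 : Heis β).snd = 0 := rfl
@[simp] lemma Heis.inv_fst (a : Heis β) : (a⁻¹).fst = -a.fst := rfl
@[simp] lemma Heis.inv_snd (a : Heis β) : (a⁻¹).snd = -a.snd + β a.fst a.fst := rfl

instance : Group (Heis β) where
  mul_assoc a b c := by ext <;> simp [map_add, LinearMap.add_apply] <;> abel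
  one_mul a := by ext <;> simp
  mul_one a := by ext <;> simp
  inv_mul_cancel a := by ext <;> simp

lemma Heis.commutator_eq (a b : Heis β) :
    ⁅a, b⁆ = ⟨0, β a.fst b.fst - β b.fst a.fst⟩ := by
  show a * b * a⁻¹ * b⁻¹ = _
  ext <;> simp [map_add, map_neg, LinearMap.add_apply, LinearMap.neg_apply] <;> abel

/-- projection to first component -/
def Heis.p : Heis β →* Multiplicative V where
  toFun a := Multiplicative.ofAdd a.fst
  map_one' := rfl
  map_mul' _ _ := rfl

@[simp] lemma Heis.p_apply (a : Heis β) : Heis.p β a = Multiplicative.ofAdd a.fst := rfl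

lemma Heis.fst_eq_zero_of_mem_commutator {a : Heis β} (h : a ∈ commutator (Heis β)) :
    a.fst = 0 := by
  have := Abelianization.commutator_subset_ker (Heis.p β) h
  simpa [MonoidHom.mem_ker] using this

lemma Heis.lcs_two_eq_bot : (⊤ : Subgroup (Heis β)).lowerCentralSeries 2 = ⊥ := by
  rw [eq_bot_iff, Subgroup.lowerCentralSeries_succ, Subgroup.commutator_def, Subgroup.closure_le]
  rintro x ⟨h, hh, k, -, rfl⟩
  have h1 : h.fst = 0 := Heis.fst_eq_zero_of_mem_commutator β (by
    rw [← Subgroup.top_lowerCentralSeries_one]; exact hh)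
  have : ⁅h, k⁆ = (1 : Heis β) := by
    rw [Heis.commutator_eq, h1]; ext <;> simp
  simpa [commutatorElement_def] using this

end Heis

/-! ### Auxiliary: the combinatorics of pairs and relator vectors -/

section LA
variable (m : ℕ)

abbrev PIdx (m : ℕ) := {p : Fin m × Fin m // p.1 < p.2}

noncomputable def pairEquiv : PIdx m ≃ Σ k : Fin m, Fin k.val where
  toFun p := ⟨p.1.2, ⟨p.1.1.val, p.2⟩⟩
  invFun s := ⟨(⟨s.2.val, lt_trans s.2.isLt s.1.isLt⟩, s.1), s.2.isLt⟩
  left_inv p := by ext <;> rfl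
  right_inv s := by rcases s with ⟨k, j⟩; rfl

lemma card_PIdx : Fintype.card (PIdx m) = m * (m - 1) / 2 := by
  rw [Fintype.card_congr (pairEquiv m), Fintype.card_sigma]
  simp only [Fintype.card_fin]
  rw [show (∑ x : Fin m, (x : ℕ)) = ∑ i ∈ Finset.range m, i from
    Fin.sum_univ_eq_sum_range (fun i => i) m, Finset.sum_range_id]

variable {m : ℕ}

/-- standard basis vector -/
noncomputable def ev (i : Fin m) : Fin m → ℤ := Pi.single i 1

/-- the bilinear map `B v w = (v_{p.1} * w_{p.2})_p`. -/
noncomputable def Bmap : (Fin m → ℤ) →ₗ[ℤ] (Fin m → ℤ) →ₗ[ℤ] (PIdx m → ℤ) :=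
  LinearMap.mk₂ ℤ (fun v w p => v p.1.1 * w p.1.2)
    (by intros; funext p; simp [add_mul])
    (by intros; funext p; simp [mul_assoc])
    (by intros; funext p; simp [mul_add])
    (by intros; funext p; simp; ring)

@[simp] lemma Bmap_apply (v w : Fin m → ℤ) (p : PIdx m) :
    Bmap v w p = v p.1.1 * w p.1.2 := rfl

lemma Bmap_ev_ev {j k : Fin m} (h : j < k) :
    Bmap (ev j) (ev k) = Pi.single (⟨(j, k), h⟩ : PIdx m) 1 := by
  funext p
  rcases p with ⟨⟨a, b⟩, hab⟩
  simp only [Bmap_apply, ev, Pi.single_apply]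
  by_cases h1 : a = j <;> by_cases h2 : b = k <;>
    simp [h1, h2, Subtype.ext_iff, Prod.ext_iff] <;> tauto

lemma Bmap_ev_ev_rev {j k : Fin m} (h : j < k) : Bmap (ev k) (ev j) = 0 := by
  funext p
  rcases p with ⟨⟨a, b⟩, hab⟩
  simp only [Bmap_apply, ev, Pi.single_apply, Pi.zero_apply]
  by_cases h1 : a = k <;> by_cases h2 : b = j <;> simp [h1, h2]
  subst h1 h2
  exact absurd (lt_trans hab h) (lt_irrefl _)

section Rel
variable (ℓ : Fin m → Fin m → ℤ)

/-- abelianized image of `lam i` -/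
noncomputable def mu (i : Fin m) : Fin m → ℤ := fun k => if k = i then 0 else ℓ i k

/-- the relator vectors -/
noncomputable def Rvec (i : Fin m) : PIdx m → ℤ :=
  Bmap (ev i) (mu ℓ i) - Bmap (mu ℓ i) (ev i)

lemma sum_Rvec (hsym : ∀ i j : Fin m, i ≠ j → ℓ i j = ℓ j i) :
    ∑ i, Rvec ℓ i = 0 := by
  funext p
  rcases p with ⟨⟨a, b⟩, hab⟩
  have hne : a ≠ b := ne_of_lt hab
  simp only [Finset.sum_apply, Rvec, Pi.sub_apply, Bmap_apply, ev, Pi.single_apply,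
    Pi.zero_apply, ite_mul, one_mul, zero_mul, mul_ite, mul_one, mul_zero]
  rw [Finset.sum_sub_distrib]
  simp [mu, hne, hne.symm, hsym a b hne]

end Rel
end LA

/-! ### counting lemma -/
lemma count_aux {m : ℕ} (hm : 2 ≤ m) :
    (m - 1) * (m - 2) / 2 + (m - 1) ≤ m * (m - 1) / 2 := by
  obtain ⟨k, rfl⟩ : ∃ k, m = k + 2 := ⟨m - 2, by omega⟩
  have h1 : (k + 2) - 1 = k + 1 := rfl
  have h2 : (k + 2) - 2 = k := rfl
  rw [h1, h2]
  have h3 : 2 ∣ k * (k + 1) := (Nat.even_mul_succ_self k).two_dvd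
  have h4 : (k + 1) * k = k * (k + 1) := Nat.mul_comm _ _
  have h5 : (k + 2) * (k + 1) = k * (k + 1) + 2 * (k + 1) := by ring
  rw [h4, h5]
  generalize k * (k + 1) = a at h3 ⊢
  omega


open scoped commutatorElement in
/-- The group `π = ⟨x_1,…,x_m ∣ [x_1,λ_1], …, [x_m,λ_m], γ₃(F)⟩`: the quotient of the free
group `F` on `m` generators by the normal closure of the relators `⁅x_i, λ_i⁆` together with
the third lower central subgroup `γ₃(F) = lowerCentralSeries F 2`. -/
def MilnorQuotient {m : ℕ} (lam : Fin m → FreeGroup (Fin m)) : Type :=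
  FreeGroup (Fin m) ⧸ Subgroup.normalClosure
    ((Set.range fun i => ⁅FreeGroup.of i, lam i⁆) ∪
      (((⊤ : Subgroup (FreeGroup (Fin m))).lowerCentralSeries 2 : Subgroup (FreeGroup (Fin m))) : Set (FreeGroup (Fin m))))

instance {m : ℕ} (lam : Fin m → FreeGroup (Fin m)) : Group (MilnorQuotient lam) := by
  unfold MilnorQuotient; infer_instance

set_option maxHeartbeats 1000000 in
/-- If `m ≥ 2`, `ℓ i j` is symmetric, and each `λ i` is congruent to
`∏_{j ≠ i} x_j^(ℓ i j)` (in increasing order of `j`) modulo `γ₂(F)`, then the commutator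
subgroup `γ₂(π)` of `π = ⟨x_1,…,x_m ∣ [x_i,λ_i], γ₃(F)⟩` surjects onto the free abelian
group `ℤ^((m-1)(m-2)/2)`. -/
theorem milnorQuotient_lcs2_surjects_onto_free_abelian (m : ℕ) (hm : 2 ≤ m)
    (ℓ : Fin m → Fin m → ℤ) (hsym : ∀ i j : Fin m, i ≠ j → ℓ i j = ℓ j i)
    (lam : Fin m → FreeGroup (Fin m))
    (hlam : ∀ i : Fin m,
      lam i * ((List.ofFn fun j : Fin m =>
          if j = i then 1 else FreeGroup.of j ^ ℓ i j).prod)⁻¹ ∈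
        (⊤ : Subgroup (FreeGroup (Fin m))).lowerCentralSeries 1) :
    ∃ φ : ((⊤ : Subgroup (MilnorQuotient lam)).lowerCentralSeries 1) →*
        Multiplicative (Fin ((m - 1) * (m - 2) / 2) → ℤ),
      Function.Surjective φ := by
  classical
  haveI : NeZero m := ⟨by omega⟩
  set N : ℕ := (m - 1) * (m - 2) / 2 with hN
  have hcast : m - 1 + 1 = m := by omega
  -- the span of the relator vectors (without the 0-th one)
  set S : Submodule ℤ (PIdx m → ℤ) :=
    Submodule.span ℤ (Set.range fun i : Fin (m - 1) => Rvec ℓ (Fin.cast hcast i.succ)) with hS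
  have hmem : ∀ i : Fin m, Rvec ℓ i ∈ S := by
    intro i
    by_cases hi : i = 0
    · subst hi
      have hsum := sum_Rvec ℓ hsym
      have h0 : Rvec ℓ 0 = -∑ i ∈ Finset.univ.erase 0, Rvec ℓ i := by
        have := Finset.add_sum_erase Finset.univ (Rvec ℓ) (Finset.mem_univ (0 : Fin m))
        rw [hsum] at this
        linear_combination (norm := module) this
      rw [h0]
      refine neg_mem (Submodule.sum_mem _ ?_)
      intro i hi
      have hi0 : i ≠ 0 := (Finset.mem_erase.mp hi).1
      have hv : (i : ℕ) ≠ 0 := fun h => hi0 (Fin.ext (by simp [h]))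
      have heq : i = Fin.cast hcast ((Fin.cast hcast.symm i).pred (by
        simp only [ne_eq, Fin.ext_iff, Fin.coe_cast, Fin.val_zero]; omega)).succ := by
        simp only [Fin.ext_iff, Fin.coe_cast, Fin.val_succ, Fin.coe_pred]
        omega
      rw [heq]
      exact Submodule.subset_span ⟨_, rfl⟩
    · have hv : (i : ℕ) ≠ 0 := fun h => hi (Fin.ext (by simp [h]))
      have heq : i = Fin.cast hcast ((Fin.cast hcast.symm i).pred (by
        simp only [ne_eq, Fin.ext_iff, Fin.coe_cast, Fin.val_zero]; omega)).succ := by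
        simp only [Fin.ext_iff, Fin.coe_cast, Fin.val_succ, Fin.coe_pred]
        omega
      rw [heq]
      exact Submodule.subset_span ⟨_, rfl⟩
  -- Smith normal form
  obtain ⟨n, snf⟩ := S.smithNormalForm (Pi.basisFun ℤ (PIdx m))
  have hn : n ≤ m - 1 := by
    have h1 : (Module.rank ℤ S) = n := by
      rw [rank_eq_card_basis snf.bN, Fintype.card_fin]
    have h2 : Module.rank ℤ S ≤ ((m - 1 : ℕ) : Cardinal) := by
      rw [hS]
      refine (rank_span_le _).trans ?_
      refine (Cardinal.mk_range_le).trans ?_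
      simp
    rw [h1] at h2
    exact_mod_cast h2
  -- index set for the free part of the quotient
  set ι' := {x : PIdx m // x ∉ Set.range snf.f} with hι'
  have hcard : N ≤ Fintype.card ι' := by
    have h1 : Fintype.card ι' = Fintype.card (PIdx m) -
        Fintype.card {x : PIdx m // x ∈ Set.range snf.f} :=
      Fintype.card_subtype_compl _
    have h2 : Fintype.card {x : PIdx m // x ∈ Set.range snf.f} ≤ n := by
      have hsurj : Function.Surjective
          (fun i : Fin n => (⟨snf.f i, Set.mem_range_self i⟩ :
            {x : PIdx m // x ∈ Set.range snf.f})) := by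
        rintro ⟨x, i, rfl⟩
        exact ⟨i, rfl⟩
      exact (Fintype.card_le_of_surjective _ hsurj).trans_eq (Fintype.card_fin n)
    have h3 := count_aux hm
    have h4 := card_PIdx m
    omega
  obtain ⟨emb⟩ := Function.Embedding.nonempty_of_card_le (by simpa using hcard :
    Fintype.card (Fin N) ≤ Fintype.card ι')
  -- the linear map onto the free abelian target
  set L : (PIdx m → ℤ) →ₗ[ℤ] (Fin N → ℤ) :=
    LinearMap.pi (fun k => snf.bM.coord (emb k).val) with hL
  have hLapp : ∀ (y : PIdx m → ℤ) k, L y k = snf.bM.repr y (emb k).val := fun _ _ => rfl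
  have hLS : ∀ s ∈ S, L s = 0 := by
    intro s hs
    funext k
    rw [hLapp]
    exact snf.repr_eq_zero_of_notMem_range (⟨s, hs⟩ : S) (emb k).property
  -- the nilpotent group
  set β : (Fin m → ℤ) →ₗ[ℤ] (Fin m → ℤ) →ₗ[ℤ] (Fin N → ℤ) :=
    (LinearMap.llcomp ℤ (Fin m → ℤ) (PIdx m → ℤ) (Fin N → ℤ) L).comp Bmap with hβ
  have hβapp : ∀ v w, β v w = L (Bmap v w) := fun _ _ => rfl
  set Φ : FreeGroup (Fin m) →* Heis β :=
    FreeGroup.lift (fun i => (⟨ev i, 0⟩ : Heis β)) with hΦ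
  -- the first component of Φ (lam i)
  have hfstlam : ∀ i, (Φ (lam i)).fst = mu ℓ i := by
    intro i
    set pΦ : FreeGroup (Fin m) →* Multiplicative (Fin m → ℤ) := (Heis.p β).comp Φ with hpΦ
    have h1 : pΦ (lam i) = pΦ ((List.ofFn fun j : Fin m =>
        if j = i then 1 else FreeGroup.of j ^ ℓ i j).prod) := by
      have h2 := Abelianization.commutator_subset_ker pΦ (by
        rw [← Subgroup.top_lowerCentralSeries_one]; exact hlam i)
      rw [MonoidHom.mem_ker, map_mul, map_inv] at h2
      exact mul_inv_eq_one.mp h2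
    have h3 : pΦ ((List.ofFn fun j : Fin m =>
        if j = i then 1 else FreeGroup.of j ^ ℓ i j).prod) = Multiplicative.ofAdd (mu ℓ i) := by
      rw [map_list_prod, List.map_ofFn, List.prod_ofFn]
      have h4 : ∀ j : Fin m, (pΦ ∘ fun j : Fin m =>
          if j = i then 1 else FreeGroup.of j ^ ℓ i j) j
          = Multiplicative.ofAdd (if j = i then 0 else ℓ i j • ev j) := by
        intro j
        by_cases hj : j = i
        · simp [hj]
        · simp only [Function.comp_apply, hj, if_false, map_zpow]
          have : pΦ (FreeGroup.of j) = Multiplicative.ofAdd (ev j) := by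
            simp [hpΦ, hΦ]
          rw [this]
          rfl
      simp only [h4]
      rw [show (∏ j : Fin m, Multiplicative.ofAdd (if j = i then 0 else ℓ i j • ev j))
          = Multiplicative.ofAdd (∑ j : Fin m, if j = i then 0 else ℓ i j • ev j) from rfl]
      congr 1
      funext k
      simp only [Finset.sum_apply]
      rw [Finset.sum_eq_single k]
      · by_cases hk : k = i <;> simp [hk, ev, mu]
      · intro j _ hj
        by_cases hji : j = i <;> simp [hji, ev, Pi.single_apply, hj]
      · simp
    have : pΦ (lam i) = Multiplicative.ofAdd (mu ℓ i) := h1.trans h3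
    simpa [hpΦ] using congrArg Multiplicative.toAdd this
  -- the relators die in Heis β
  have hker : Subgroup.normalClosure
      ((Set.range fun i => ⁅FreeGroup.of i, lam i⁆) ∪
        (((⊤ : Subgroup (FreeGroup (Fin m))).lowerCentralSeries 2 : Subgroup (FreeGroup (Fin m))) : Set (FreeGroup (Fin m)))) ≤ Φ.ker := by
    refine Subgroup.normalClosure_le_normal ?_
    rintro x (⟨i, rfl⟩ | hx)
    · rw [SetLike.mem_coe, MonoidHom.mem_ker, map_commutatorElement, Heis.commutator_eq]
      have h5 : (Φ (FreeGroup.of i)).fst = ev i := by simp [hΦ]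
      rw [hfstlam i, h5]
      have h6 : β (ev i) (mu ℓ i) - β (mu ℓ i) (ev i) = L (Rvec ℓ i) := by
        rw [hβapp, hβapp, Rvec, map_sub]
      have h7 : β (ev i) (mu ℓ i) - β (mu ℓ i) (ev i) = 0 := by
        rw [h6]; exact hLS _ (hmem i)
      rw [h7]
      rfl
    · rw [SetLike.mem_coe, MonoidHom.mem_ker]
      have : Φ x ∈ (⊤ : Subgroup (Heis β)).lowerCentralSeries 2 :=
        Subgroup.lowerCentralSeries.map Φ 2 ⟨x, hx, rfl⟩
      rw [Heis.lcs_two_eq_bot] at this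
      exact this
  -- the induced hom on the quotient
  set Φbar : MilnorQuotient lam →* Heis β := QuotientGroup.lift _ Φ hker with hΦbar
  have hΦbar_mk : ∀ x : FreeGroup (Fin m), Φbar (QuotientGroup.mk x) = Φ x := fun _ => rfl
  have hfst0 : ∀ x : MilnorQuotient lam,
      x ∈ (⊤ : Subgroup (MilnorQuotient lam)).lowerCentralSeries 1 → (Φbar x).fst = 0 := by
    intro x hx
    have h8 := Abelianization.commutator_subset_ker ((Heis.p β).comp Φbar) (by
      rw [← Subgroup.top_lowerCentralSeries_one]; exact hx)
    rw [MonoidHom.mem_ker] at h8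
    simpa using h8
  -- the homomorphism φ
  set φ : ((⊤ : Subgroup (MilnorQuotient lam)).lowerCentralSeries 1) →* Multiplicative (Fin N → ℤ) :=
    { toFun := fun x => Multiplicative.ofAdd (Φbar x.val).snd
      map_one' := by
        simp only [OneMemClass.coe_one, map_one]
        rfl
      map_mul' := by
        intro x y
        have hx := hfst0 x.val x.property
        simp only [Subgroup.coe_mul, map_mul, Heis.mul_snd, hx, map_zero,
          LinearMap.zero_apply, add_zero]
        rfl } with hφ
  refine ⟨φ, ?_⟩
  -- surjectivity via a submodule argument
  set T : Submodule ℤ (Fin N → ℤ) :=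
    { carrier := {h | Multiplicative.ofAdd h ∈ φ.range}
      add_mem' := by
        intro a b ha hb
        exact φ.range.mul_mem ha hb
      zero_mem' := φ.range.one_mem
      smul_mem' := by
        intro c h hh
        exact φ.range.zpow_mem hh c } with hT
  have hgen : ∀ p : PIdx m, L (Pi.single p 1) ∈ T := by
    rintro ⟨⟨j, k⟩, hjk⟩
    -- the commutator of the images of the generators j and k
    set xj : MilnorQuotient lam := QuotientGroup.mk (FreeGroup.of j) with hxj
    set xk : MilnorQuotient lam := QuotientGroup.mk (FreeGroup.of k) with hxk
    have hc : ⁅xj, xk⁆ ∈ (⊤ : Subgroup (MilnorQuotient lam)).lowerCentralSeries 1 := by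
      rw [Subgroup.top_lowerCentralSeries_one]
      exact Subgroup.commutator_mem_commutator (Subgroup.mem_top _) (Subgroup.mem_top _)
    refine ⟨⟨⁅xj, xk⁆, hc⟩, ?_⟩
    show Multiplicative.ofAdd (Φbar ⁅xj, xk⁆).snd = _
    have hmkc : (⁅xj, xk⁆ : MilnorQuotient lam)
        = QuotientGroup.mk ⁅FreeGroup.of j, FreeGroup.of k⁆ := rfl
    rw [hmkc, hΦbar_mk, map_commutatorElement, Heis.commutator_eq]
    have h9 : (Φ (FreeGroup.of j)).fst = ev j := by simp [hΦ]
    have h10 : (Φ (FreeGroup.of k)).fst = ev k := by simp [hΦ]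
    rw [h9, h10]
    congr 1
    rw [hβapp, hβapp, Bmap_ev_ev hjk, Bmap_ev_ev_rev hjk, map_zero, sub_zero]
  have hTtop : T = ⊤ := by
    rw [eq_top_iff]
    have h11 : Submodule.span ℤ (Set.range fun p : PIdx m => L (Pi.single p 1)) = ⊤ := by
      have h12 : (Set.range fun p : PIdx m => L (Pi.single p 1))
          = L '' (Set.range fun p : PIdx m => (Pi.single p 1 : PIdx m → ℤ)) := by
        rw [← Set.range_comp]
        rfl
      rw [h12, ← Submodule.map_span]
      have h13 : Submodule.span ℤ (Set.range fun p : PIdx m => (Pi.single p 1 : PIdx m → ℤ))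
          = ⊤ := by
        have h14 : (fun p : PIdx m => (Pi.single p 1 : PIdx m → ℤ))
            = ⇑(Pi.basisFun ℤ (PIdx m)) := by
          funext p
          rw [Pi.basisFun_apply]
        rw [h14, Module.Basis.span_eq]
      rw [h13]
      -- L is surjective
      rw [Submodule.map_top, LinearMap.range_eq_top]
      intro h
      refine ⟨∑ k, h k • snf.bM (emb k).val, ?_⟩
      funext k'
      rw [hLapp, map_sum]
      simp only [map_smul, Module.Basis.repr_self, Finsupp.coe_smul, Finsupp.coe_finset_sum,
        Finset.sum_apply, Pi.smul_apply, Finsupp.single_apply, smul_eq_mul]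
      rw [Finset.sum_eq_single k']
      · simp
      · intro b _ hb
        have : (emb b).val ≠ (emb k').val := by
          intro hcontra
          exact hb (emb.injective (Subtype.ext hcontra))
        simp [this]
      · simp
    rw [← h11, Submodule.span_le]
    rintro x ⟨p, rfl⟩
    exact hgen p
  intro h'
  have : Multiplicative.toAdd h' ∈ T := by rw [hTtop]; trivial
  obtain ⟨x, hx⟩ := this
  exact ⟨x, hx⟩
end

section
/- Let F = FreeGroup (Fin 2) with generators x₁, x₂, let ℓ ∈ ℤ, and let λ₁, λ₂ ∈ F satisfy λ₁ · x₂^{−ℓ} ∈ γ₂(F) and λ₂ · x₁^{−ℓ} ∈ γ₂(F). Let π be the quotient of F by the normal closure of {⁅x₁, λ₁⁆, ⁅x₂, λ₂⁆} ∪ γ₃(F). Then γ₂(π) is isomorphic, as a group, to the cyclic group ℤ/ℓℤ (that is, to ZMod ℓ.natAbs; in particular it is infinite cyclic when ℓ = 0). Note that γ₃(π) is trivial, so γ₂(π) = γ₂(π)/γ₃(π). -/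
set_option linter.unusedTactic false
set_option linter.unreachableTactic false
set_option linter.unnecessarySeqFocus false

open scoped commutatorElement

/-- The group `π = ⟨x₁, x₂ ∣ [x₁,λ₁], [x₂,λ₂], γ₃(F)⟩`: the quotient of the free group `F`
on two generators by the normal closure of `{⁅x₁,λ₁⁆, ⁅x₂,λ₂⁆}` together with the third
lower central subgroup `γ₃(F) = lowerCentralSeries F 2`. -/
def MilnorQuotient2 (lam₁ lam₂ : FreeGroup (Fin 2)) : Type :=
  FreeGroup (Fin 2) ⧸ Subgroup.normalClosure
    (({⁅FreeGroup.of (0 : Fin 2), lam₁⁆, ⁅FreeGroup.of (1 : Fin 2), lam₂⁆} : Set (FreeGroup (Fin 2))) ∪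
      ((⊤ : Subgroup (FreeGroup (Fin 2))).lowerCentralSeries 2 : Set (FreeGroup (Fin 2))))

instance (lam₁ lam₂ : FreeGroup (Fin 2)) : Group (MilnorQuotient2 lam₁ lam₂) := by
  unfold MilnorQuotient2; infer_instance


namespace MilnorAux

/-! ### A Heisenberg-type group with central entry in `ZMod n` -/

@[ext] structure Heis (n : ℕ) where
  a : ℤ
  b : ℤ
  c : ZMod n

namespace Heis
variable {n : ℕ}

instance : Mul (Heis n) :=
  ⟨fun x y => ⟨x.a + y.a, x.b + y.b, x.c + y.c + ((x.a * y.b : ℤ) : ZMod n)⟩⟩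
instance : One (Heis n) := ⟨⟨0, 0, 0⟩⟩
instance : Inv (Heis n) := ⟨fun x => ⟨-x.a, -x.b, -x.c + ((x.a * x.b : ℤ) : ZMod n)⟩⟩

@[simp] lemma mul_a (x y : Heis n) : (x * y).a = x.a + y.a := rfl
@[simp] lemma mul_b (x y : Heis n) : (x * y).b = x.b + y.b := rfl
@[simp] lemma mul_c (x y : Heis n) : (x * y).c = x.c + y.c + ((x.a * y.b : ℤ) : ZMod n) := rfl
@[simp] lemma one_a : (1 : Heis n).a = 0 := rfl
@[simp] lemma one_b : (1 : Heis n).b = 0 := rfl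
@[simp] lemma one_c : (1 : Heis n).c = 0 := rfl
@[simp] lemma inv_a (x : Heis n) : (x⁻¹).a = -x.a := rfl
@[simp] lemma inv_b (x : Heis n) : (x⁻¹).b = -x.b := rfl
@[simp] lemma inv_c (x : Heis n) : (x⁻¹).c = -x.c + ((x.a * x.b : ℤ) : ZMod n) := rfl

instance : Group (Heis n) where
  mul_assoc x y z := by ext <;> simp <;> push_cast <;> ring
  one_mul x := by ext <;> simp
  mul_one x := by ext <;> simp
  inv_mul_cancel x := by ext <;> simp <;> push_cast <;> ring

lemma central_comm (x y : Heis n) (ha : x.a = 0) (hb : x.b = 0) : x * y = y * x := by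
  ext <;> simp [ha, hb] <;> ring

lemma comm_a_b (g h : Heis n) : (⁅g, h⁆).a = 0 ∧ (⁅g, h⁆).b = 0 := by
  constructor <;> simp [commutatorElement_def] <;> ring

lemma lcs1_vanish : ∀ x ∈ (⊤ : Subgroup (Heis n)).lowerCentralSeries 1, x.a = 0 ∧ x.b = 0 := by
  have : (⊤ : Subgroup (Heis n)).lowerCentralSeries 1 ≤
      { carrier := {x : Heis n | x.a = 0 ∧ x.b = 0}
        one_mem' := ⟨rfl, rfl⟩
        mul_mem' := by rintro x y ⟨u1, u2⟩ ⟨u3, u4⟩; exact ⟨by simp [u1, u3], by simp [u2, u4]⟩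
        inv_mem' := by rintro x ⟨u1, u2⟩; exact ⟨by simp [u1], by simp [u2]⟩ } := by
    rw [lowerCentralSeries_one, commutator_def, Subgroup.commutator_le]
    intro g _ h _
    exact comm_a_b g h
  exact this

lemma lcs1_central : ∀ x ∈ (⊤ : Subgroup (Heis n)).lowerCentralSeries 1, ∀ y : Heis n, x * y = y * x :=
  fun x hx y => central_comm x y (lcs1_vanish x hx).1 (lcs1_vanish x hx).2

lemma lcs2_eq_bot : (⊤ : Subgroup (Heis n)).lowerCentralSeries 2 = ⊥ := by
  rw [eq_bot_iff]
  show ⁅(⊤ : Subgroup (Heis n)).lowerCentralSeries 1, (⊤ : Subgroup (Heis n))⁆ ≤ ⊥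
  rw [Subgroup.commutator_le]
  intro g hg h _
  rw [Subgroup.mem_bot, commutatorElement_eq_one_iff_mul_comm]
  exact lcs1_central g hg h

def mkA : Multiplicative ℤ →* Heis n where
  toFun t := ⟨t.toAdd, 0, 0⟩
  map_one' := rfl
  map_mul' x y := by ext <;> simp

def mkB : Multiplicative ℤ →* Heis n where
  toFun t := ⟨0, t.toAdd, 0⟩
  map_one' := rfl
  map_mul' x y := by ext <;> simp

def mkC : Multiplicative (ZMod n) →* Heis n where
  toFun t := ⟨0, 0, t.toAdd⟩
  map_one' := rfl
  map_mul' x y := by ext <;> simp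

@[simp] lemma X_zpow (k : ℤ) : (⟨1, 0, 0⟩ : Heis n) ^ k = ⟨k, 0, 0⟩ := by
  have h : (⟨1, 0, 0⟩ : Heis n) = mkA (.ofAdd 1) := rfl
  rw [h, ← map_zpow]
  show mkA (.ofAdd 1 ^ k) = _
  rw [← ofAdd_zsmul, smul_eq_mul, mul_one]
  rfl

@[simp] lemma Y_zpow (k : ℤ) : (⟨0, 1, 0⟩ : Heis n) ^ k = ⟨0, k, 0⟩ := by
  have h : (⟨0, 1, 0⟩ : Heis n) = mkB (.ofAdd 1) := rfl
  rw [h, ← map_zpow]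
  show mkB (.ofAdd 1 ^ k) = _
  rw [← ofAdd_zsmul, smul_eq_mul, mul_one]
  rfl

@[simp] lemma Z_zpow (k : ℤ) : (⟨0, 0, 1⟩ : Heis n) ^ k = ⟨0, 0, (k : ZMod n)⟩ := by
  have h : (⟨0, 0, 1⟩ : Heis n) = mkC (.ofAdd 1) := rfl
  rw [h, ← map_zpow]
  show mkC (.ofAdd 1 ^ k) = _
  rw [← ofAdd_zsmul, zsmul_one]
  rfl

lemma commXY : ⁅(⟨1, 0, 0⟩ : Heis n), (⟨0, 1, 0⟩ : Heis n)⁆ = ⟨0, 0, 1⟩ := by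
  ext <;> simp [commutatorElement_def]

end Heis

/-! ### Commutator bilinearity in groups whose `γ₂` is central -/

section Central
variable {G : Type*} [Group G]

lemma comm_mem_lcs1 (g h : G) : ⁅g, h⁆ ∈ (⊤ : Subgroup G).lowerCentralSeries 1 := by
  rw [lowerCentralSeries_one, commutator_def]
  exact Subgroup.commutator_mem_commutator (Subgroup.mem_top g) (Subgroup.mem_top h)

lemma lcsMap {H : Type*} [Group H] (f : G →* H) (n : ℕ) :
    Subgroup.map f ((⊤ : Subgroup G).lowerCentralSeries n) ≤ (⊤ : Subgroup H).lowerCentralSeries n := by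
  rw [Subgroup.map_lowerCentralSeries]
  exact Subgroup.lowerCentralSeries_mono n le_top

lemma conj_lcs1 (hc : ∀ z ∈ (⊤ : Subgroup G).lowerCentralSeries 1, ∀ g : G, z * g = g * z)
    (z : G) (hz : z ∈ (⊤ : Subgroup G).lowerCentralSeries 1) (g : G) : g * z * g⁻¹ = z := by
  rw [← hc z hz g, mul_inv_cancel_right]

lemma comm_mul_right (hc : ∀ z ∈ (⊤ : Subgroup G).lowerCentralSeries 1, ∀ g : G, z * g = g * z)
    (g h₁ h₂ : G) : ⁅g, h₁ * h₂⁆ = ⁅g, h₁⁆ * ⁅g, h₂⁆ := by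
  have key : ⁅g, h₁ * h₂⁆ = ⁅g, h₁⁆ * (h₁ * ⁅g, h₂⁆ * h₁⁻¹) := by group
  rw [key, conj_lcs1 hc _ (comm_mem_lcs1 g h₂) h₁]

def commRightHom (hc : ∀ z ∈ (⊤ : Subgroup G).lowerCentralSeries 1, ∀ g : G, z * g = g * z) (g : G) :
    G →* G where
  toFun h := ⁅g, h⁆
  map_one' := commutatorElement_one_right g
  map_mul' := comm_mul_right hc g

lemma comm_mul_left (hc : ∀ z ∈ (⊤ : Subgroup G).lowerCentralSeries 1, ∀ g : G, z * g = g * z)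
    (g₁ g₂ h : G) : ⁅g₁ * g₂, h⁆ = ⁅g₁, h⁆ * ⁅g₂, h⁆ := by
  have key : ⁅g₁ * g₂, h⁆ = (g₁ * ⁅g₂, h⁆ * g₁⁻¹) * ⁅g₁, h⁆ := by group
  rw [key, conj_lcs1 hc _ (comm_mem_lcs1 g₂ h) g₁, hc _ (comm_mem_lcs1 g₂ h)]

def commLeftHom (hc : ∀ z ∈ (⊤ : Subgroup G).lowerCentralSeries 1, ∀ g : G, z * g = g * z) (h : G) :
    G →* G where
  toFun g := ⁅g, h⁆
  map_one' := commutatorElement_one_left h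
  map_mul' g₁ g₂ := comm_mul_left hc g₁ g₂ h

lemma comm_zpow_right (hc : ∀ z ∈ (⊤ : Subgroup G).lowerCentralSeries 1, ∀ g : G, z * g = g * z)
    (g h : G) (k : ℤ) : ⁅g, h ^ k⁆ = ⁅g, h⁆ ^ k :=
  map_zpow (commRightHom hc g) h k

lemma lcs1_eq_zpowers (hc : ∀ z ∈ (⊤ : Subgroup G).lowerCentralSeries 1, ∀ g : G, z * g = g * z)
    (x y : G) (htop : Subgroup.closure ({x, y} : Set G) = ⊤) :
    (⊤ : Subgroup G).lowerCentralSeries 1 = Subgroup.zpowers ⁅x, y⁆ := by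
  have keyL : ∀ t g : G, ⁅g, t⁆ ∈ Subgroup.closure ({⁅x, t⁆, ⁅y, t⁆} : Set G) := by
    intro t g
    have hg : g ∈ Subgroup.closure ({x, y} : Set G) := htop ▸ Subgroup.mem_top g
    have hmem := Subgroup.mem_map_of_mem (commLeftHom hc t) hg
    rw [MonoidHom.map_closure, Set.image_pair] at hmem
    exact hmem
  have hx : ∀ g : G, ⁅g, x⁆ ∈ Subgroup.zpowers ⁅x, y⁆ := by
    intro g
    refine (Subgroup.closure_le _).mpr ?_ (keyL x g)
    rintro u (rfl | rfl)
    · exact Subgroup.mem_zpowers_iff.mpr ⟨0, by group⟩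
    · exact Subgroup.mem_zpowers_iff.mpr ⟨-1, by group⟩
  have hy : ∀ g : G, ⁅g, y⁆ ∈ Subgroup.zpowers ⁅x, y⁆ := by
    intro g
    refine (Subgroup.closure_le _).mpr ?_ (keyL y g)
    rintro u (rfl | rfl)
    · exact Subgroup.mem_zpowers_iff.mpr ⟨1, by group⟩
    · exact Subgroup.mem_zpowers_iff.mpr ⟨0, by group⟩
  apply le_antisymm
  · rw [lowerCentralSeries_one, commutator_def, Subgroup.commutator_le]
    intro g _ h _
    have hh : h ∈ Subgroup.closure ({x, y} : Set G) := htop ▸ Subgroup.mem_top h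
    have hmem := Subgroup.mem_map_of_mem (commRightHom hc g) hh
    rw [MonoidHom.map_closure, Set.image_pair] at hmem
    refine (Subgroup.closure_le _).mpr ?_ hmem
    rintro u (rfl | rfl)
    · exact hx g
    · exact hy g
  · rw [Subgroup.zpowers_le]
    exact comm_mem_lcs1 x y

lemma lcs_le_map_of_surjective {H : Type*} [Group H] (f : G →* H)
    (hf : Function.Surjective f) (n : ℕ) :
    (⊤ : Subgroup H).lowerCentralSeries n ≤ Subgroup.map f ((⊤ : Subgroup G).lowerCentralSeries n) := by
  induction n with
  | zero =>
      show (⊤ : Subgroup H) ≤ Subgroup.map f ⊤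
      rw [← MonoidHom.range_eq_map, MonoidHom.range_eq_top.mpr hf]
  | succ n ih =>
      show ⁅(⊤ : Subgroup H).lowerCentralSeries n, ⊤⁆ ≤ _
      calc ⁅(⊤ : Subgroup H).lowerCentralSeries n, (⊤ : Subgroup H)⁆
          ≤ ⁅Subgroup.map f ((⊤ : Subgroup G).lowerCentralSeries n), Subgroup.map f ⊤⁆ := by
            refine Subgroup.commutator_mono ih ?_
            rw [← MonoidHom.range_eq_map, MonoidHom.range_eq_top.mpr hf]
        _ = Subgroup.map f ⁅(⊤ : Subgroup G).lowerCentralSeries n, ⊤⁆ :=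
            (Subgroup.map_commutator _ _ f).symm
        _ = Subgroup.map f ((⊤ : Subgroup G).lowerCentralSeries (n + 1)) := rfl

end Central

/-! ### The Milnor quotient -/

section Milnor
open Subgroup

abbrev F2 := FreeGroup (Fin 2)

variable (ℓ : ℤ) (lam₁ lam₂ : F2)

def rels : Set F2 :=
  ({⁅FreeGroup.of (0 : Fin 2), lam₁⁆, ⁅FreeGroup.of (1 : Fin 2), lam₂⁆} : Set F2) ∪
    ((⊤ : Subgroup F2).lowerCentralSeries 2 : Set F2)

def NN : Subgroup F2 := Subgroup.normalClosure (rels lam₁ lam₂)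

instance : (NN lam₁ lam₂).Normal := Subgroup.normalClosure_normal

def phi0 : F2 →* Heis ℓ.natAbs :=
  FreeGroup.lift ![(⟨1, 0, 0⟩ : Heis ℓ.natAbs), ⟨0, 1, 0⟩]

@[simp] lemma phi0_of0 : phi0 ℓ (FreeGroup.of 0) = (⟨1, 0, 0⟩ : Heis ℓ.natAbs) := by
  simp [phi0]

@[simp] lemma phi0_of1 : phi0 ℓ (FreeGroup.of 1) = (⟨0, 1, 0⟩ : Heis ℓ.natAbs) := by
  simp [phi0]

lemma natAbs_cast_zero : ((ℓ : ℤ) : ZMod ℓ.natAbs) = 0 := by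
  rw [ZMod.intCast_zmod_eq_zero_iff_dvd]
  exact Int.natAbs_dvd.mpr dvd_rfl

lemma rel1_ker (h₁ : lam₁ * FreeGroup.of (1 : Fin 2) ^ (-ℓ) ∈ (⊤ : Subgroup F2).lowerCentralSeries 1) :
    phi0 ℓ ⁅FreeGroup.of (0 : Fin 2), lam₁⁆ = 1 := by
  have hl : lam₁ = (lam₁ * FreeGroup.of (1 : Fin 2) ^ (-ℓ)) * FreeGroup.of 1 ^ ℓ := by group
  have hz : phi0 ℓ (lam₁ * FreeGroup.of (1 : Fin 2) ^ (-ℓ)) ∈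
      (⊤ : Subgroup (Heis ℓ.natAbs)).lowerCentralSeries 1 :=
    lcsMap (phi0 ℓ) 1 ⟨_, h₁, rfl⟩
  rw [map_commutatorElement, phi0_of0, hl, map_mul, map_zpow, phi0_of1,
    comm_mul_right Heis.lcs1_central, comm_zpow_right Heis.lcs1_central]
  have h1 : ⁅(⟨1, 0, 0⟩ : Heis ℓ.natAbs), phi0 ℓ (lam₁ * FreeGroup.of (1 : Fin 2) ^ (-ℓ))⁆ = 1 := by
    rw [commutatorElement_eq_one_iff_mul_comm]
    exact (Heis.lcs1_central _ hz _).symm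
  rw [h1, one_mul, Heis.commXY, Heis.Z_zpow, natAbs_cast_zero]
  rfl

lemma rel2_ker (h₂ : lam₂ * FreeGroup.of (0 : Fin 2) ^ (-ℓ) ∈ (⊤ : Subgroup F2).lowerCentralSeries 1) :
    phi0 ℓ ⁅FreeGroup.of (1 : Fin 2), lam₂⁆ = 1 := by
  have hl : lam₂ = (lam₂ * FreeGroup.of (0 : Fin 2) ^ (-ℓ)) * FreeGroup.of 0 ^ ℓ := by group
  have hz : phi0 ℓ (lam₂ * FreeGroup.of (0 : Fin 2) ^ (-ℓ)) ∈
      (⊤ : Subgroup (Heis ℓ.natAbs)).lowerCentralSeries 1 :=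
    lcsMap (phi0 ℓ) 1 ⟨_, h₂, rfl⟩
  rw [map_commutatorElement, phi0_of1, hl, map_mul, map_zpow, phi0_of0,
    comm_mul_right Heis.lcs1_central, comm_zpow_right Heis.lcs1_central]
  have h1 : ⁅(⟨0, 1, 0⟩ : Heis ℓ.natAbs), phi0 ℓ (lam₂ * FreeGroup.of (0 : Fin 2) ^ (-ℓ))⁆ = 1 := by
    rw [commutatorElement_eq_one_iff_mul_comm]
    exact (Heis.lcs1_central _ hz _).symm
  have hYX : ⁅(⟨0, 1, 0⟩ : Heis ℓ.natAbs), (⟨1, 0, 0⟩ : Heis ℓ.natAbs)⁆ =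
      ⁅(⟨1, 0, 0⟩ : Heis ℓ.natAbs), (⟨0, 1, 0⟩ : Heis ℓ.natAbs)⁆⁻¹ :=
    (commutatorElement_inv _ _).symm
  rw [h1, one_mul, hYX, inv_zpow, Heis.commXY, Heis.Z_zpow, natAbs_cast_zero]
  exact inv_eq_one.mpr rfl

lemma N_le_ker (h₁ : lam₁ * FreeGroup.of (1 : Fin 2) ^ (-ℓ) ∈ (⊤ : Subgroup F2).lowerCentralSeries 1)
    (h₂ : lam₂ * FreeGroup.of (0 : Fin 2) ^ (-ℓ) ∈ (⊤ : Subgroup F2).lowerCentralSeries 1) :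
    NN lam₁ lam₂ ≤ (phi0 ℓ).ker := by
  apply Subgroup.normalClosure_le_normal
  rintro w (hw | hw)
  · rcases hw with rfl | rfl
    · exact rel1_ker ℓ lam₁ h₁
    · exact rel2_ker ℓ lam₂ h₂
  · have hmem := lcsMap (phi0 ℓ) 2 ⟨w, hw, rfl⟩
    rw [Heis.lcs2_eq_bot] at hmem
    simpa [MonoidHom.mem_ker] using hmem

abbrev Q := F2 ⧸ NN lam₁ lam₂

def mk : F2 →* Q lam₁ lam₂ := QuotientGroup.mk' (NN lam₁ lam₂)

lemma mk_surj : Function.Surjective (mk lam₁ lam₂) := QuotientGroup.mk'_surjective _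

lemma closure_F2 :
    Subgroup.closure ({FreeGroup.of 0, FreeGroup.of 1} : Set F2) = ⊤ := by
  have h := FreeGroup.closure_range_of (Fin 2)
  have hr : Set.range (FreeGroup.of : Fin 2 → F2) =
      {FreeGroup.of 0, FreeGroup.of 1} := by
    ext w
    simp [Set.mem_range, Fin.exists_fin_two, Set.mem_insert_iff, eq_comm]
  rwa [hr] at h

lemma closure_Q :
    Subgroup.closure ({mk lam₁ lam₂ (FreeGroup.of 0), mk lam₁ lam₂ (FreeGroup.of 1)} : Set (Q lam₁ lam₂)) = ⊤ := by
  rw [← Set.image_pair, ← MonoidHom.map_closure, closure_F2, ← MonoidHom.range_eq_map]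
  exact MonoidHom.range_eq_top.mpr (mk_surj lam₁ lam₂)

lemma lcs2_Q : (⊤ : Subgroup (Q lam₁ lam₂)).lowerCentralSeries 2 = ⊥ := by
  rw [eq_bot_iff]
  refine (lcs_le_map_of_surjective (mk lam₁ lam₂) (mk_surj lam₁ lam₂) 2).trans ?_
  have h1 : (⊤ : Subgroup F2).lowerCentralSeries 2 ≤ NN lam₁ lam₂ :=
    fun w hw => Subgroup.subset_normalClosure (Or.inr hw)
  refine (Subgroup.map_mono h1).trans ?_
  rintro _ ⟨x, hx, rfl⟩
  rw [Subgroup.mem_bot]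
  exact (QuotientGroup.eq_one_iff x).mpr hx

lemma central_Q : ∀ z ∈ (⊤ : Subgroup (Q lam₁ lam₂)).lowerCentralSeries 1, ∀ g : Q lam₁ lam₂,
    z * g = g * z := by
  intro z hz g
  rw [← commutatorElement_eq_one_iff_mul_comm]
  have hm : ⁅z, g⁆ ∈ (⊤ : Subgroup (Q lam₁ lam₂)).lowerCentralSeries 2 :=
    Subgroup.commutator_mem_commutator hz (Subgroup.mem_top g)
  rwa [lcs2_Q, Subgroup.mem_bot] at hm

/-- The image of the basic commutator in `Q`. -/
def cbar : Q lam₁ lam₂ := ⁅mk lam₁ lam₂ (FreeGroup.of 0), mk lam₁ lam₂ (FreeGroup.of 1)⁆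

lemma lcs1_Q_eq : (⊤ : Subgroup (Q lam₁ lam₂)).lowerCentralSeries 1 = Subgroup.zpowers (cbar lam₁ lam₂) :=
  lcs1_eq_zpowers (central_Q lam₁ lam₂) _ _ (closure_Q lam₁ lam₂)

lemma cbar_pow_ell (h₁ : lam₁ * FreeGroup.of (1 : Fin 2) ^ (-ℓ) ∈ (⊤ : Subgroup F2).lowerCentralSeries 1) :
    cbar lam₁ lam₂ ^ ℓ = 1 := by
  have hrel : mk lam₁ lam₂ ⁅FreeGroup.of (0 : Fin 2), lam₁⁆ = 1 :=
    (QuotientGroup.eq_one_iff _).mpr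
      (Subgroup.subset_normalClosure (Or.inl (Set.mem_insert _ _)))
  have hl : lam₁ = (lam₁ * FreeGroup.of (1 : Fin 2) ^ (-ℓ)) * FreeGroup.of 1 ^ ℓ := by group
  rw [map_commutatorElement] at hrel
  have hsplit : mk lam₁ lam₂ lam₁ =
      mk lam₁ lam₂ (lam₁ * FreeGroup.of (1 : Fin 2) ^ (-ℓ)) * mk lam₁ lam₂ (FreeGroup.of 1) ^ ℓ := by
    rw [← map_zpow, ← map_mul]
    exact congrArg _ hl
  rw [hsplit, comm_mul_right (central_Q lam₁ lam₂),
    comm_zpow_right (central_Q lam₁ lam₂)] at hrel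
  have hw : mk lam₁ lam₂ (lam₁ * FreeGroup.of (1 : Fin 2) ^ (-ℓ)) ∈
      (⊤ : Subgroup (Q lam₁ lam₂)).lowerCentralSeries 1 :=
    lcsMap (mk lam₁ lam₂) 1 ⟨_, h₁, rfl⟩
  have h1 : ⁅mk lam₁ lam₂ (FreeGroup.of 0), mk lam₁ lam₂ (lam₁ * FreeGroup.of (1 : Fin 2) ^ (-ℓ))⁆ = 1 := by
    rw [commutatorElement_eq_one_iff_mul_comm]
    exact (central_Q lam₁ lam₂ _ hw _).symm
  rw [h1, one_mul] at hrel
  exact hrel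

variable {ℓ lam₁ lam₂} in
/-- The induced homomorphism on the quotient. -/
def phiQ (h : NN lam₁ lam₂ ≤ (phi0 ℓ).ker) : Q lam₁ lam₂ →* Heis ℓ.natAbs :=
  QuotientGroup.lift (NN lam₁ lam₂) (phi0 ℓ) h

variable {ℓ lam₁ lam₂} in
lemma phiQ_mk (h : NN lam₁ lam₂ ≤ (phi0 ℓ).ker) (g : F2) :
    phiQ h (mk lam₁ lam₂ g) = phi0 ℓ g := rfl

variable {ℓ lam₁ lam₂} in
lemma phiQ_cbar (h : NN lam₁ lam₂ ≤ (phi0 ℓ).ker) :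
    phiQ h (cbar lam₁ lam₂) = (⟨0, 0, 1⟩ : Heis ℓ.natAbs) := by
  rw [cbar, map_commutatorElement, phiQ_mk, phiQ_mk, phi0_of0, phi0_of1, Heis.commXY]

variable {ℓ lam₁ lam₂} in
/-- The homomorphism from `γ₂(Q)` to `ZMod ℓ.natAbs`. -/
def toHom (h : NN lam₁ lam₂ ≤ (phi0 ℓ).ker) :
    ((⊤ : Subgroup (Q lam₁ lam₂)).lowerCentralSeries 1) →* Multiplicative (ZMod ℓ.natAbs) where
  toFun z := Multiplicative.ofAdd (phiQ h (z : Q lam₁ lam₂)).c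
  map_one' := by
    simp only [OneMemClass.coe_one, map_one, Heis.one_c, ofAdd_zero]
  map_mul' z w := by
    have hz : (phiQ h (z : Q lam₁ lam₂)).a = 0 :=
      (Heis.lcs1_vanish _ (lcsMap (phiQ h) 1 ⟨_, z.2, rfl⟩)).1
    simp only [Subgroup.coe_mul, map_mul, Heis.mul_c, hz]
    rw [zero_mul, Int.cast_zero, add_zero, ofAdd_add]

theorem main (ℓ : ℤ) (lam₁ lam₂ : F2)
    (h₁ : lam₁ * FreeGroup.of (1 : Fin 2) ^ (-ℓ) ∈ (⊤ : Subgroup F2).lowerCentralSeries 1)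
    (h₂ : lam₂ * FreeGroup.of (0 : Fin 2) ^ (-ℓ) ∈ (⊤ : Subgroup F2).lowerCentralSeries 1) :
    Nonempty (((⊤ : Subgroup (Q lam₁ lam₂)).lowerCentralSeries 1) ≃* Multiplicative (ZMod ℓ.natAbs)) := by
  have hker : NN lam₁ lam₂ ≤ (phi0 ℓ).ker := N_le_ker ℓ lam₁ lam₂ h₁ h₂
  have hc2 : ∀ k : ℤ, phiQ hker (cbar lam₁ lam₂ ^ k) = ⟨0, 0, (k : ZMod ℓ.natAbs)⟩ := by
    intro k
    rw [map_zpow, phiQ_cbar, Heis.Z_zpow]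
  refine ⟨MulEquiv.ofBijective (toHom hker) ⟨?_, ?_⟩⟩
  · rw [injective_iff_map_eq_one]
    rintro ⟨z, hz⟩ h0
    obtain ⟨k, rfl⟩ := Subgroup.mem_zpowers_iff.mp ((lcs1_Q_eq lam₁ lam₂) ▸ hz)
    have hc : ((k : ℤ) : ZMod ℓ.natAbs) = 0 := by
      have := congrArg Multiplicative.toAdd h0
      change (phiQ hker (cbar lam₁ lam₂ ^ k)).c = 0 at this
      simpa [toHom, hc2 k] using this
    have hdvd : ℓ ∣ k := Int.natAbs_dvd.mp ((ZMod.intCast_zmod_eq_zero_iff_dvd k ℓ.natAbs).mp hc)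
    obtain ⟨m, rfl⟩ := hdvd
    ext
    show cbar lam₁ lam₂ ^ (ℓ * m) = 1
    rw [zpow_mul, cbar_pow_ell ℓ lam₁ lam₂ h₁, one_zpow]
  · intro t
    obtain ⟨k, hk⟩ := ZMod.intCast_surjective (Multiplicative.toAdd t)
    refine ⟨⟨cbar lam₁ lam₂ ^ k, ?_⟩, ?_⟩
    · rw [lcs1_Q_eq]
      exact Subgroup.mem_zpowers_iff.mpr ⟨k, rfl⟩
    · show Multiplicative.ofAdd (phiQ hker (cbar lam₁ lam₂ ^ k)).c = t
      rw [hc2 k, hk]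
      rfl

end Milnor

end MilnorAux


/-- If `λ₁ ≡ x₂^ℓ` and `λ₂ ≡ x₁^ℓ` modulo `γ₂(F)`, then the commutator subgroup `γ₂(π)` of
`π = ⟨x₁,x₂ ∣ [x₁,λ₁], [x₂,λ₂], γ₃(F)⟩` is isomorphic to the cyclic group `ℤ/ℓℤ`
(infinite cyclic when `ℓ = 0`). -/
theorem milnorQuotient2_lcs2_iso_zmod (ℓ : ℤ) (lam₁ lam₂ : FreeGroup (Fin 2))
    (h₁ : lam₁ * FreeGroup.of (1 : Fin 2) ^ (-ℓ) ∈ (⊤ : Subgroup (FreeGroup (Fin 2))).lowerCentralSeries 1)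
    (h₂ : lam₂ * FreeGroup.of (0 : Fin 2) ^ (-ℓ) ∈ (⊤ : Subgroup (FreeGroup (Fin 2))).lowerCentralSeries 1) :
    Nonempty (((⊤ : Subgroup (MilnorQuotient2 lam₁ lam₂)).lowerCentralSeries 1) ≃*
      Multiplicative (ZMod ℓ.natAbs)) := by
  exact MilnorAux.main ℓ lam₁ lam₂ h₁ h₂
end
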